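/- A bijection g between two open proper convex cones is gauge-reversing if and only if g is order-reversing, homogeneous of degree −1, and g^{-1} is order-reversing. -/

import Mathlib

open Set Filter Topology

section Aux

variable {V : Type*} [NormedAddCommGroup V] [NormedSpace ℝ V] {C : Set V}

lemma aux_zero_mem_closure (hne : C.Nonempty)
    (hcone : ∀ (c : ℝ), 0 < c → ∀ x ∈ C, c • x ∈ C) :
    (0:V) ∈ closure C := by
  obtain ⟨x, hx⟩ := id hne
  have h1 : Tendsto (fun n : ℕ => ((n:ℝ)+1)⁻¹) atTop (𝓝 0) := by
    simpa using (tendsto_one_div_add_atTop_nhds_zero_nat :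
      Tendsto (fun n : ℕ => 1 / ((n:ℝ) + 1)) atTop (𝓝 0))
  have h : Tendsto (fun n : ℕ => ((n:ℝ)+1)⁻¹ • x) atTop (𝓝 0) := by
    simpa using h1.smul_const x
  exact mem_closure_of_tendsto h (Eventually.of_forall fun n => hcone _ (by positivity) x hx)

lemma aux_smul_closure (hne : C.Nonempty)
    (hcone : ∀ (c : ℝ), 0 < c → ∀ x ∈ C, c • x ∈ C)
    {c : ℝ} (hc : 0 ≤ c) {v : V} (hv : v ∈ closure C) : c • v ∈ closure C := by
  rcases hc.lt_or_eq with h | h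
  · exact map_mem_closure (continuous_const_smul c) hv (fun x hx => hcone c h x hx)
  · rw [← h, zero_smul]; exact aux_zero_mem_closure hne hcone

lemma aux_add_closure (hconv : Convex ℝ C) (hne : C.Nonempty)
    (hcone : ∀ (c : ℝ), 0 < c → ∀ x ∈ C, c • x ∈ C)
    {u v : V} (hu : u ∈ closure C) (hv : v ∈ closure C) :
    u + v ∈ closure C := by
  have hm := hconv.closure hu hv (by norm_num : (0:ℝ) ≤ 1/2) (by norm_num : (0:ℝ) ≤ 1/2)
    (by norm_num)
  have h2 := aux_smul_closure hne hcone (by norm_num : (0:ℝ) ≤ 2) hm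
  have : (2:ℝ) • ((1/2:ℝ) • u + (1/2:ℝ) • v) = u + v := by
    rw [smul_add, smul_smul, smul_smul]; norm_num
  rwa [this] at h2

lemma aux_gauge_isLeast (hopen : IsOpen C) (hne : C.Nonempty)
    (hcone : ∀ (c : ℝ), 0 < c → ∀ x ∈ C, c • x ∈ C)
    (hproper : ∀ v ∈ closure C, -v ∈ closure C → v = 0)
    (h0 : (0:V) ∉ C) {x y : V} (hx : x ∈ C) (hy : y ∈ C) :
    IsLeast {l : ℝ | 0 < l ∧ l • y - x ∈ closure C}
      (sInf {l : ℝ | 0 < l ∧ l • y - x ∈ closure C}) := by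
  set S := {l : ℝ | 0 < l ∧ l • y - x ∈ closure C} with hSdef
  obtain ⟨ε, hε, hball⟩ := Metric.isOpen_iff.mp hopen y hy
  have hSne : S.Nonempty := by
    set l : ℝ := ‖x‖/ε + 1 with hldef
    have hl : 0 < l := by positivity
    refine ⟨l, hl, ?_⟩
    have hmem : y - l⁻¹ • x ∈ C := by
      apply hball
      rw [Metric.mem_ball, dist_eq_norm]
      have h1 : y - l⁻¹ • x - y = -(l⁻¹ • x) := by abel
      rw [h1, norm_neg, norm_smul, Real.norm_eq_abs, abs_of_pos (inv_pos.2 hl)]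
      rw [inv_mul_lt_iff₀ hl]
      have : l * ε = ‖x‖ + ε := by rw [hldef]; field_simp
      linarith
    have h2 := hcone l hl _ hmem
    rw [smul_sub, smul_inv_smul₀ hl.ne'] at h2
    exact subset_closure h2
  have hbdd : BddBelow S := ⟨0, fun l hl => hl.1.le⟩
  obtain ⟨u, _, hulim, humem⟩ := exists_seq_tendsto_sInf hSne hbdd
  have hcl : (sInf S) • y - x ∈ closure C := by
    have ht : Tendsto (fun n => u n • y - x) atTop (𝓝 ((sInf S) • y - x)) :=
      (hulim.smul_const y).sub tendsto_const_nhds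
    exact isClosed_closure.mem_of_tendsto ht (Eventually.of_forall fun n => (humem n).2)
  have hnonneg : 0 ≤ sInf S := le_csInf hSne fun l hl => hl.1.le
  have hpos : 0 < sInf S := by
    rcases hnonneg.lt_or_eq with h | h
    · exact h
    · exfalso
      rw [← h, zero_smul, zero_sub] at hcl
      exact h0 ((hproper x (subset_closure hx) hcl) ▸ hx)
  exact ⟨⟨hpos, hcl⟩, fun l hl => csInf_le hbdd hl⟩

lemma aux_gauge_smul (hne : C.Nonempty)
    (hcone : ∀ (c : ℝ), 0 < c → ∀ x ∈ C, c • x ∈ C)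
    (hproper : ∀ v ∈ closure C, -v ∈ closure C → v = 0)
    (h0 : (0:V) ∉ C) {x : V} (hx : x ∈ C)
    {a b : ℝ} (ha : 0 < a) (hb : 0 < b) :
    IsLeast {l : ℝ | 0 < l ∧ l • (b • x) - a • x ∈ closure C} (a / b) := by
  constructor
  · refine ⟨by positivity, ?_⟩
    have h : (a / b) • (b • x) - a • x = 0 := by
      rw [smul_smul, div_mul_cancel₀ _ hb.ne', sub_self]
    rw [h]; exact aux_zero_mem_closure hne hcone
  · intro l hl
    by_contra hcon
    push_neg at hcon
    have hlb : l * b < a := (lt_div_iff₀ hb).mp hcon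
    have heq : l • (b • x) - a • x = -((a - l*b) • x) := by
      rw [smul_smul, ← neg_smul, ← sub_smul]
      congr 1
      ring
    have h1 : (a - l*b) • x ∈ closure C :=
      aux_smul_closure hne hcone (by linarith) (subset_closure hx)
    have h2 : -((a - l*b) • x) ∈ closure C := heq ▸ hl.2
    rcases smul_eq_zero.mp (hproper _ h1 h2) with h' | h'
    · nlinarith
    · exact h0 (h' ▸ hx)

lemma aux_gauge_self (hne : C.Nonempty)
    (hcone : ∀ (c : ℝ), 0 < c → ∀ x ∈ C, c • x ∈ C)
    (hproper : ∀ v ∈ closure C, -v ∈ closure C → v = 0)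
    (h0 : (0:V) ∉ C) {x : V} (hx : x ∈ C) :
    sInf {l : ℝ | 0 < l ∧ l • x - x ∈ closure C} = 1 := by
  have h := (aux_gauge_smul hne hcone hproper h0 hx one_pos one_pos).csInf_eq
  simpa using h

lemma aux_degenerate (hopen : IsOpen C)
    (hproper : ∀ v ∈ closure C, -v ∈ closure C → v = 0)
    (h0 : (0:V) ∈ C) : ∀ v : V, v = 0 := by
  intro v
  by_contra hv
  obtain ⟨ε, hε, hball⟩ := Metric.isOpen_iff.mp hopen 0 h0
  have hv' : 0 < ‖v‖ := norm_pos_iff.mpr hv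
  set w := (ε / (2*‖v‖)) • v with hw
  have hwnorm : ‖w‖ = ε / 2 := by
    rw [hw, norm_smul, Real.norm_eq_abs, abs_of_pos (by positivity)]
    field_simp
  have hwm : w ∈ Metric.ball (0:V) ε := by
    rw [Metric.mem_ball, dist_zero_right, hwnorm]; linarith
  have hwm' : -w ∈ Metric.ball (0:V) ε := by
    rw [Metric.mem_ball, dist_zero_right, norm_neg, hwnorm]; linarith
  have := hproper w (subset_closure (hball hwm)) (subset_closure (hball hwm'))
  rcases smul_eq_zero.mp this with h | h
  · exact absurd h (by positivity)
  · exact hv h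

end Aux

theorem gaugeReversing_iff
    {V V' : Type*}
    [NormedAddCommGroup V] [NormedSpace ℝ V] [FiniteDimensional ℝ V]
    [NormedAddCommGroup V'] [NormedSpace ℝ V'] [FiniteDimensional ℝ V']
    (C : Set V) (C' : Set V')
    (hopen : IsOpen C) (hconv : Convex ℝ C) (hne : C.Nonempty)
    (hcone : ∀ (c : ℝ), 0 < c → ∀ x ∈ C, c • x ∈ C)
    (hproper : ∀ v ∈ closure C, -v ∈ closure C → v = 0)
    (hopen' : IsOpen C') (hconv' : Convex ℝ C') (hne' : C'.Nonempty)
    (hcone' : ∀ (c : ℝ), 0 < c → ∀ x ∈ C', c • x ∈ C')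
    (hproper' : ∀ v ∈ closure C', -v ∈ closure C' → v = 0)
    (M : V → V → ℝ) (hM : ∀ x y, M x y = sInf {l : ℝ | 0 < l ∧ l • y - x ∈ closure C})
    (M' : V' → V' → ℝ)
    (hM' : ∀ x y, M' x y = sInf {l : ℝ | 0 < l ∧ l • y - x ∈ closure C'})
    (g : V → V') (hg : Set.BijOn g C C') :
    (∀ x ∈ C, ∀ y ∈ C, M' (g x) (g y) = M y x) ↔
    ((∀ x ∈ C, ∀ y ∈ C, y - x ∈ closure C → g x - g y ∈ closure C') ∧
     (∀ (c : ℝ), 0 < c → ∀ x ∈ C, g (c • x) = c⁻¹ • g x) ∧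
     (∀ x ∈ C, ∀ y ∈ C, g y - g x ∈ closure C' → x - y ∈ closure C)) := by
  by_cases h0 : (0:V) ∈ C
  · -- V is degenerate
    have hzero : ∀ v : V, v = 0 := aux_degenerate hopen hproper h0
    by_cases h0' : (0:V') ∈ C'
    · -- both degenerate : both sides true
      have hzero' : ∀ v : V', v = 0 := aux_degenerate hopen' hproper' h0'
      have hL : ∀ x ∈ C, ∀ y ∈ C, M' (g x) (g y) = M y x := by
        intro x hx y hy
        rw [hM', hM]
        have e1 : {l : ℝ | 0 < l ∧ l • g y - g x ∈ closure C'} = Ioi 0 := by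
          ext l
          simp [mem_Ioi, hzero' (l • g y - g x), subset_closure h0']
        have e2 : {l : ℝ | 0 < l ∧ l • x - y ∈ closure C} = Ioi 0 := by
          ext l
          simp [mem_Ioi, hzero (l • x - y), subset_closure h0]
        rw [e1, e2]
      refine iff_of_true hL ⟨?_, ?_, ?_⟩
      · intro x _ y _ _
        rw [hzero' (g x - g y)]; exact subset_closure h0'
      · intro c _ x _
        exact (hzero' _).trans (hzero' _).symm
      · intro x _ y _ _
        rw [hzero (x - y)]; exact subset_closure h0
    · -- V degenerate, V' not : both sides false
      refine iff_of_false ?_ ?_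
      · intro hL
        have h := hL 0 h0 0 h0
        rw [hM', hM] at h
        have e2 : {l : ℝ | 0 < l ∧ l • (0:V) - 0 ∈ closure C} = Ioi 0 := by
          ext l
          simp [mem_Ioi, subset_closure h0]
        have e1 : sInf {l : ℝ | 0 < l ∧ l • g 0 - g 0 ∈ closure C'} = 1 :=
          aux_gauge_self hne' hcone' hproper' h0' (hg.mapsTo h0)
        rw [e1, e2, csInf_Ioi] at h
        norm_num at h
      · rintro ⟨-, h2, -⟩
        have h := h2 2 (by norm_num) 0 h0
        rw [smul_zero] at h
        have hg0 : g 0 = 0 := by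
          have h' : (2:ℝ) • g 0 = (2:ℝ) • ((2:ℝ)⁻¹ • g 0) := congrArg _ h
          rw [smul_smul] at h'
          norm_num at h'
          have := congrArg (fun u => (2:ℝ) • g 0 - u) h'.symm
          simp only [two_smul] at h'
          -- 2 • g 0 = g 0 ⇒ g 0 = 0
          have : g 0 + g 0 = g 0 := h'
          simpa using congrArg (fun u => u - g 0) this
        exact h0' (hg0 ▸ hg.mapsTo h0)
  · by_cases h0' : (0:V') ∈ C'
    · -- V' degenerate, V not : both sides false
      obtain ⟨x, hx⟩ := id hne
      have hzero' : ∀ v : V', v = 0 := aux_degenerate hopen' hproper' h0'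
      refine iff_of_false ?_ ?_
      · intro hL
        have h := hL x hx x hx
        rw [hM', hM] at h
        have e1 : {l : ℝ | 0 < l ∧ l • g x - g x ∈ closure C'} = Ioi 0 := by
          ext l
          simp [mem_Ioi, hzero' (l • g x - g x), subset_closure h0']
        have e2 : sInf {l : ℝ | 0 < l ∧ l • x - x ∈ closure C} = 1 :=
          aux_gauge_self hne hcone hproper h0 hx
        rw [e1, e2, csInf_Ioi] at h
        norm_num at h
      · rintro ⟨-, -, h3⟩
        have h2x : (2:ℝ) • x ∈ C := hcone 2 (by norm_num) x hx
        have h := h3 x hx ((2:ℝ) • x) h2x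
          (by rw [hzero' (g ((2:ℝ) • x) - g x)]; exact subset_closure h0')
        have hneg : x - (2:ℝ) • x = -x := by
          rw [two_smul]; abel
        rw [hneg] at h
        exact h0 ((hproper x (subset_closure hx) h) ▸ hx)
    · -- main case
      have key : ∀ {x y : V}, x ∈ C → y ∈ C →
          IsLeast {l : ℝ | 0 < l ∧ l • y - x ∈ closure C} (M x y) := by
        intro x y hx hy
        rw [hM]
        exact aux_gauge_isLeast hopen hne hcone hproper h0 hx hy
      have key' : ∀ {x y : V'}, x ∈ C' → y ∈ C' →
          IsLeast {l : ℝ | 0 < l ∧ l • y - x ∈ closure C'} (M' x y) := by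
        intro x y hx hy
        rw [hM']
        exact aux_gauge_isLeast hopen' hne' hcone' hproper' h0' hx hy
      have le_one : ∀ {x y : V}, x ∈ C → y ∈ C → (y - x ∈ closure C ↔ M x y ≤ 1) := by
        intro x y hx hy
        constructor
        · intro h
          exact (key hx hy).2 ⟨one_pos, by simpa using h⟩
        · intro h
          obtain ⟨⟨hpos, hmem⟩, -⟩ := key hx hy
          have h1 : (1 - M x y) • y ∈ closure C :=
            aux_smul_closure hne hcone (by linarith) (subset_closure hy)
          have h2 := aux_add_closure hconv hne hcone hmem h1
          have heq : (M x y • y - x) + (1 - M x y) • y = y - x := by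
            rw [sub_smul, one_smul]; abel
          rwa [heq] at h2
      have le_one' : ∀ {x y : V'}, x ∈ C' → y ∈ C' → (y - x ∈ closure C' ↔ M' x y ≤ 1) := by
        intro x y hx hy
        constructor
        · intro h
          exact (key' hx hy).2 ⟨one_pos, by simpa using h⟩
        · intro h
          obtain ⟨⟨hpos, hmem⟩, -⟩ := key' hx hy
          have h1 : (1 - M' x y) • y ∈ closure C' :=
            aux_smul_closure hne' hcone' (by linarith) (subset_closure hy)
          have h2 := aux_add_closure hconv' hne' hcone' hmem h1
          have heq : (M' x y • y - x) + (1 - M' x y) • y = y - x := by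
            rw [sub_smul, one_smul]; abel
          rwa [heq] at h2
      constructor
      · intro hgr
        refine ⟨?_, ?_, ?_⟩
        · intro x hx y hy hxy
          have h1 : M x y ≤ 1 := (le_one hx hy).1 hxy
          have h2 : M' (g y) (g x) ≤ 1 := by rw [hgr y hy x hx]; exact h1
          exact (le_one' (hg.mapsTo hy) (hg.mapsTo hx)).2 h2
        · intro c hc x hx
          have hcx : c • x ∈ C := hcone c hc x hx
          have e1 : M' (g (c • x)) (g x) = c⁻¹ := by
            rw [hgr (c • x) hcx x hx, hM]
            have h := (aux_gauge_smul hne hcone hproper h0 hx one_pos hc).csInf_eq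
            simpa [one_div] using h
          have e2 : M' (g x) (g (c • x)) = c := by
            rw [hgr x hx (c • x) hcx, hM]
            have h := (aux_gauge_smul hne hcone hproper h0 hx hc one_pos).csInf_eq
            simpa using h
          have k1 := key' (hg.mapsTo hcx) (hg.mapsTo hx)
          have m1 : c⁻¹ • (g x) - g (c • x) ∈ closure C' := by
            have h := k1.1.2
            rwa [e1] at h
          have k2 := key' (hg.mapsTo hx) (hg.mapsTo hcx)
          have m2 : c • (g (c • x)) - g x ∈ closure C' := by
            have h := k2.1.2
            rwa [e2] at h
          have m2' : g (c • x) - c⁻¹ • g x ∈ closure C' := by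
            have h := aux_smul_closure hne' hcone' (inv_pos.2 hc).le m2
            rwa [smul_sub, smul_smul, inv_mul_cancel₀ hc.ne', one_smul] at h
          have m1' : -(g (c • x) - c⁻¹ • g x) ∈ closure C' := by
            rw [neg_sub]; exact m1
          exact sub_eq_zero.mp (hproper' _ m2' m1')
        · intro x hx y hy hxy
          have h2 : M' (g x) (g y) ≤ 1 := (le_one' (hg.mapsTo hx) (hg.mapsTo hy)).1 hxy
          rw [hgr x hx y hy] at h2
          exact (le_one hy hx).2 h2
      · rintro ⟨h1, h2, h3⟩ x hx y hy
        have hgx := hg.mapsTo hx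
        have hgy := hg.mapsTo hy
        obtain ⟨⟨hmpos, hmmem⟩, hmlb⟩ := key hy hx
        obtain ⟨⟨hm'pos, hm'mem⟩, hm'lb⟩ := key' hgx hgy
        have hmx : M y x • x ∈ C := hcone _ hmpos x hx
        have hA := h1 y hy (M y x • x) hmx hmmem
        rw [h2 (M y x) hmpos x hx] at hA
        have hA' : M y x • g y - g x ∈ closure C' := by
          have h := aux_smul_closure hne' hcone' hmpos.le hA
          rwa [smul_sub, smul_smul, mul_inv_cancel₀ hmpos.ne', one_smul] at h
        have hle1 : M' (g x) (g y) ≤ M y x := hm'lb ⟨hmpos, hA'⟩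
        have hy' : (M' (g x) (g y))⁻¹ • y ∈ C := hcone _ (inv_pos.2 hm'pos) y hy
        have hB : g ((M' (g x) (g y))⁻¹ • y) - g x ∈ closure C' := by
          rw [h2 _ (inv_pos.2 hm'pos) y hy, inv_inv]
          exact hm'mem
        have hC := h3 x hx _ hy' hB
        have hC' : M' (g x) (g y) • x - y ∈ closure C := by
          have h := aux_smul_closure hne hcone hm'pos.le hC
          rwa [smul_sub, smul_smul, mul_inv_cancel₀ hm'pos.ne', one_smul] at h
        have hle2 : M y x ≤ M' (g x) (g y) := hmlb ⟨hm'pos, hC'⟩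
        exact le_antisymm hle1 hle2
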